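/- For integers d ≥ 2 and m ≥ 2 with m coprime to d if d is not prime, the quantity b(d,m) := (1/d)·(C(d+m-1, d-1) - C(m-1, d-1)) is a positive integer, where C(m-1,d-1) is interpreted as 0 when m < d. -/

import Mathlib

lemma lucas_step (p n k : ℕ) (hp : p.Prime) (hk : k < p) :
    (n + p).choose k ≡ n.choose k [MOD p] := by
  haveI : Fact p.Prime := ⟨hp⟩
  rw [← ZMod.natCast_eq_natCast_iff]
  rw [Nat.add_choose_eq]
  push_cast
  rw [Finset.sum_eq_single (k, 0)]
  · simp
  · rintro ⟨i, j⟩ hij hne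
    rw [Finset.HasAntidiagonal.mem_antidiagonal] at hij
    have hj : j ≠ 0 := by
      rintro rfl
      exact hne (by simp [← hij])
    have hjp : j < p := lt_of_le_of_lt (by omega) hk
    have : ((p.choose j : ℕ) : ZMod p) = 0 := by
      rw [ZMod.natCast_eq_zero_iff]
      exact Nat.Prime.dvd_choose_self hp hj hjp
    simp [this]
  · intro h
    exact absurd (by simp) h

/-- For integers `d ≥ 2` and `m ≥ 2` with `m` coprime to `d` if `d` is not prime,
the quantity `b(d,m) = (1/d)(C(d+m-1, d-1) - C(m-1, d-1))` is a positive integer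
(note `Nat.choose (m-1) (d-1) = 0` when `m < d`). -/
theorem stmt8 (d m : ℕ) (hd : 2 ≤ d) (hm : 2 ≤ m)
    (hcop : ¬ d.Prime → Nat.Coprime m d) :
    d ∣ ((d + m - 1).choose (d - 1) - (m - 1).choose (d - 1)) ∧
      0 < ((d + m - 1).choose (d - 1) - (m - 1).choose (d - 1)) / d := by
  set A := (d + m - 1).choose (d - 1) with hA
  set B := (m - 1).choose (d - 1) with hB
  have hle : B ≤ A := Nat.choose_le_choose _ (by omega)
  -- strict inequality B < A
  have hBA : B < A := by
    have h1 : d + m - 1 = (d + m - 2) + 1 := by omega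
    have h2 : d - 1 = (d - 2) + 1 := by omega
    have hA' : A = (d + m - 2).choose (d - 2) + (d + m - 2).choose (d - 1) := by
      rw [hA, h1, h2, Nat.choose_succ_succ, Nat.succ_eq_add_one, ← h2]
    have hpos : 0 < (d + m - 2).choose (d - 2) :=
      Nat.choose_pos (by omega)
    have hB' : B ≤ (d + m - 2).choose (d - 1) := Nat.choose_le_choose _ (by omega)
    omega
  have hdvd : d ∣ A - B := by
    by_cases hp : d.Prime
    · have := lucas_step d (m - 1) (d - 1) hp (by omega)
      have heq : m - 1 + d = d + m - 1 := by omega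
      rw [heq] at this
      exact (Nat.modEq_iff_dvd' hle).mp this.symm
    · have hc := hcop hp
      -- d ∣ m * A
      have h1 : d ∣ m * A := by
        have h := Nat.choose_succ_right_eq (d + m - 1) (d - 1)
        have hd1 : d - 1 + 1 = d := by omega
        have hsub : d + m - 1 - (d - 1) = m := by omega
        rw [hd1, hsub] at h
        exact ⟨(d + m - 1).choose d, by rw [mul_comm, ← h, mul_comm]⟩
      -- d ∣ m * B
      have h2 : d ∣ m * B := by
        rcases lt_or_ge m d with hmd | hmd
        · have : B = 0 := Nat.choose_eq_zero_of_lt (by omega)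
          simp [this]
        · have h := Nat.choose_succ_right_eq (m - 1) (d - 1)
          have hd1 : d - 1 + 1 = d := by omega
          have hsub : m - 1 - (d - 1) = m - d := by omega
          rw [hd1, hsub] at h
          have hd2 : d ∣ (m - d) * B := ⟨(m - 1).choose d, by rw [mul_comm, ← h, mul_comm]⟩
          have : m * B = (m - d) * B + d * B := by
            rw [← Nat.add_mul]
            congr 1
            omega
          rw [this]
          exact Nat.dvd_add hd2 ⟨B, rfl⟩
      have h3 : d ∣ m * (A - B) := by
        rw [Nat.mul_sub]
        exact Nat.dvd_sub h1 h2
      exact (Nat.Coprime.dvd_of_dvd_mul_left (Nat.Coprime.symm hc) h3)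
  refine ⟨hdvd, ?_⟩
  have := Nat.le_of_dvd (by omega) hdvd
  exact Nat.div_pos this (by omega)
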